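/- arXiv:2302.02954 — 5 statements merged into one kernel-verified Lean document; each statement's English description precedes it below -/
import Mathlib

section
/- For every integer m ≥ 2 and θ ∈ (−1,1), the integral χ_m^{+−}(θ) := ∬_{x≥0, y≤0} k_θ(x,y)^m · p_θ(1,x,y) · μ_θ(x) dx dy equals (−1)^m (2π)^{−1/2} (1+θ)/(1−θ)^{m−1}, and χ_m^{−+}(θ) := ∬_{x≤0, y≥0} k_θ(x,y)^m · p_θ(1,x,y) · μ_θ(x) dx dy equals (2π)^{−1/2} (1−θ)/(1+θ)^{m−1}. -/
open Real MeasureTheory Set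

/-- `k θ x y = sgn(y) / (sgn(y)·θ + exp(2(xy)⁺))`. -/
noncomputable def k (θ x y : ℝ) : ℝ :=
  Real.sign y / (Real.sign y * θ + Real.exp (2 * max 0 (x * y)))

/-- Transition density at time 1 of the skew Brownian motion of parameter `θ`. -/
noncomputable def p (θ x y : ℝ) : ℝ :=
  (Real.sqrt (2 * Real.pi))⁻¹ *
    (if 0 ≤ x ∧ 0 ≤ y then Real.exp (-(x - y) ^ 2 / 2) + θ * Real.exp (-(x + y) ^ 2 / 2)
     else if x ≤ 0 ∧ y ≤ 0 then Real.exp (-(x - y) ^ 2 / 2) - θ * Real.exp (-(x + y) ^ 2 / 2)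
     else if 0 ≤ x then (1 - θ) * Real.exp (-(x - y) ^ 2 / 2)
     else (1 + θ) * Real.exp (-(x - y) ^ 2 / 2))

/-- Invariant density of the skew Brownian motion of parameter `θ`. -/
noncomputable def μinv (θ x : ℝ) : ℝ := if 0 ≤ x then 1 + θ else 1 - θ


lemma integrable_g : Integrable (fun u : ℝ => Real.exp (-u^2/2)) := by
  have h := integrable_exp_neg_mul_sq (b := (1/2:ℝ)) (by norm_num)
  convert h using 2 with u
  ring_nf

lemma int_ug : ∫ u in Ioi (0:ℝ), u * Real.exp (-u^2/2) = 1 := by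
  have hderiv : ∀ x ∈ Ioi (0:ℝ), HasDerivAt (fun u : ℝ => -Real.exp (-u^2/2))
      (x * Real.exp (-x^2/2)) x := by
    intro x _
    have h1 : HasDerivAt (fun u : ℝ => -u^2/2) (-x) x := by
      have := ((hasDerivAt_pow 2 x).div_const 2).fun_neg
      simpa [neg_div] using this
    have := (h1.exp).fun_neg
    rw [show x * Real.exp (-x^2/2) = -(Real.exp (-x^2/2) * -x) by ring]
    exact this
  have hcont : ContinuousWithinAt (fun u : ℝ => -Real.exp (-u^2/2)) (Ici 0) 0 :=
    Continuous.continuousWithinAt (by fun_prop)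
  have hint : IntegrableOn (fun x : ℝ => x * Real.exp (-x^2/2)) (Ioi 0) := by
    have h := integrable_mul_exp_neg_mul_sq (b := (1/2:ℝ)) (by norm_num)
    refine Integrable.integrableOn ?_
    convert h using 2 with u; ring_nf
  have htend : Filter.Tendsto (fun u : ℝ => -Real.exp (-u^2/2)) Filter.atTop (nhds 0) := by
    rw [← neg_zero]
    refine Filter.Tendsto.neg ?_
    apply Real.tendsto_exp_atBot.comp
    have h1 : Filter.Tendsto (fun u : ℝ => u^2) Filter.atTop Filter.atTop :=
      Filter.tendsto_pow_atTop (two_ne_zero)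
    have h2 := h1.atTop_div_const (by norm_num : (0:ℝ) < 2)
    rw [show (fun u : ℝ => -u^2/2) = (fun u : ℝ => -(u^2/2)) by funext u; ring]
    exact Filter.tendsto_neg_atBot_iff.mpr h2
  have := MeasureTheory.integral_Ioi_of_hasDerivAt_of_tendsto hcont hderiv hint htend
  rw [this]; simp


lemma shift_Ici (a c : ℝ) (f : ℝ → ℝ) :
    ∫ y in Ici a, f (y + c) = ∫ y in Ici (a + c), f y := by
  have A : MeasurableEmbedding (fun x : ℝ => x + c) :=
    (Homeomorph.addRight c).measurableEmbedding
  have h := A.setIntegral_map (μ := volume) f (Ici (a + c))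
  rw [map_add_right_eq_self volume c] at h
  rw [h]
  congr 1
  ext x
  simp [le_sub_iff_add_le]

noncomputable def G (x : ℝ) : ℝ := ∫ u in Ici x, Real.exp (-u^2/2)

lemma G_antitone : Antitone G := by
  intro a b hab
  refine setIntegral_mono_set integrable_g.integrableOn ?_ ?_
  · filter_upwards with u using (Real.exp_pos _).le
  · exact HasSubset.Subset.eventuallyLE (Ici_subset_Ici.mpr hab)

lemma G_nonneg (x : ℝ) : 0 ≤ G x :=
  setIntegral_nonneg measurableSet_Ici fun u _ => (Real.exp_pos _).le

lemma G_bound {x : ℝ} (hx : 0 ≤ x) : G x ≤ G 0 * Real.exp (-x^2/2) := by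
  have h1 : G x ≤ ∫ u in Ici x, Real.exp (-x^2/2) * Real.exp (-(u-x)^2/2) := by
    refine setIntegral_mono_on integrable_g.integrableOn ?_ measurableSet_Ici ?_
    · exact (((integrable_g.comp_sub_right x)).const_mul _).integrableOn
    · intro u hu
      rw [← Real.exp_add]
      apply Real.exp_le_exp.mpr
      have := mem_Ici.mp hu
      nlinarith
  have h2 : (∫ u in Ici x, Real.exp (-x^2/2) * Real.exp (-(u-x)^2/2))
      = Real.exp (-x^2/2) * G 0 := by
    rw [MeasureTheory.integral_const_mul]
    congr 1
    have := shift_Ici x (-x) (fun u => Real.exp (-u^2/2))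
    simp only [add_neg_cancel] at this
    rw [G, ← this]
    congr 1 with u
  rw [h2] at h1
  linarith

lemma key1 : ∫ x in Ici (0:ℝ), G x = 1 := by
  set g : ℝ → ℝ := fun u => Real.exp (-u^2/2) with hg
  set F : ℝ × ℝ → ℝ := fun p => Set.indicator (Ici p.1) g p.2 with hF
  set μ : Measure ℝ := volume.restrict (Ici (0:ℝ)) with hμ
  have hFeq : F = Set.indicator {p : ℝ × ℝ | p.1 ≤ p.2} (fun p => g p.2) := by
    funext p
    by_cases h : p.1 ≤ p.2 <;>
      simp [hF, Set.indicator_apply, mem_Ici, h]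
  have hgc : Continuous g := by rw [hg]; fun_prop
  have hFmeas : AEStronglyMeasurable F (μ.prod volume) := by
    rw [hFeq]
    exact (((hgc.comp continuous_snd).stronglyMeasurable).indicator
      (measurableSet_le measurable_fst measurable_snd)).aestronglyMeasurable
  have hGmeas : AEStronglyMeasurable G μ := G_antitone.measurable.aestronglyMeasurable
  have hnorm : ∀ x : ℝ, (∫ y, ‖F (x, y)‖) = G x := by
    intro x
    have : (fun y => ‖F (x, y)‖) = fun y => Set.indicator (Ici x) g y := by
      funext y
      by_cases h : x ≤ y
      · simp [hF, Set.indicator_apply, mem_Ici, h, abs_of_nonneg (Real.exp_pos _).le, hg]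
      · simp [hF, Set.indicator_apply, mem_Ici, h]
    rw [this, MeasureTheory.integral_indicator measurableSet_Ici]
    rfl
  have hFint : Integrable F (μ.prod volume) := by
    rw [MeasureTheory.integrable_prod_iff hFmeas]
    constructor
    · filter_upwards with x
      exact integrable_g.indicator measurableSet_Ici
    · simp only [hnorm]
      refine Integrable.mono' ((integrable_g.const_mul (G 0)).restrict) hGmeas ?_
      filter_upwards [ae_restrict_mem measurableSet_Ici] with x hx
      rw [Real.norm_eq_abs, abs_of_nonneg (G_nonneg x)]
      exact G_bound hx
  have hswap := MeasureTheory.integral_integral_swap (f := fun x y => F (x, y)) hFint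
  have hL : (∫ x, ∫ y, F (x, y) ∂volume ∂μ) = ∫ x in Ici (0:ℝ), G x := by
    refine integral_congr_ae ?_
    filter_upwards with x
    rw [show (fun y => F (x, y)) = fun y => Set.indicator (Ici x) g y from rfl,
      MeasureTheory.integral_indicator measurableSet_Ici]
    rfl
  have hR : (∫ y, ∫ x, F (x, y) ∂μ ∂volume) = ∫ u in Ioi (0:ℝ), u * g u := by
    have h1 : ∀ y : ℝ, (∫ x, F (x, y) ∂μ) = Set.indicator (Ici 0) (fun u => u * g u) y := by
      intro y
      have h2 : (fun x => F (x, y)) = fun x => Set.indicator (Iic y) (fun _ => g y) x := by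
        funext x
        by_cases h : x ≤ y <;>
          simp [hF, Set.indicator_apply, mem_Ici, mem_Iic, h]
      rw [h2, MeasureTheory.integral_indicator measurableSet_Iic]
      rw [MeasureTheory.setIntegral_const, measureReal_restrict_apply measurableSet_Iic]
      by_cases hy : 0 ≤ y
      · rw [Set.Iic_inter_Ici, Real.volume_real_Icc]
        simp [Set.indicator_apply, hy, ENNReal.toReal_ofReal, smul_eq_mul]
      · rw [Set.Iic_inter_Ici, Set.Icc_eq_empty (by linarith)]
        simp [Set.indicator_apply, hy]
    simp only [h1]
    rw [MeasureTheory.integral_indicator measurableSet_Ici,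
      MeasureTheory.integral_Ici_eq_integral_Ioi]
  rw [← hL, hswap, hR, int_ug]
lemma inner_pm (x : ℝ) : (∫ y in Iic (0:ℝ), Real.exp (-(x-y)^2/2)) = G x := by
  have heq : (fun y : ℝ => Real.exp (-(x-y)^2/2))
      = fun y : ℝ => (fun t : ℝ => Real.exp (-(t + x)^2/2)) (-y) := by
    funext y; simp only []; ring_nf
  rw [heq, integral_comp_neg_Iic (0:ℝ) (fun t : ℝ => Real.exp (-(t + x)^2/2)), neg_zero,
    ← MeasureTheory.integral_Ici_eq_integral_Ioi]
  have h2 := shift_Ici 0 x (fun u => Real.exp (-u^2/2))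
  rw [zero_add] at h2
  rw [h2]; rfl

lemma key_pm : ∫ x in Ici (0:ℝ), ∫ y in Iic (0:ℝ), Real.exp (-(x-y)^2/2) = 1 := by
  simp only [inner_pm]; exact key1

lemma inner_mp (x : ℝ) : (∫ y in Ici (0:ℝ), Real.exp (-(x-y)^2/2)) = G (-x) := by
  have heq : (fun y : ℝ => Real.exp (-(x-y)^2/2))
      = fun y : ℝ => (fun u : ℝ => Real.exp (-u^2/2)) (y + -x) := by
    funext y; simp only []; ring_nf
  rw [heq, shift_Ici 0 (-x) (fun u => Real.exp (-u^2/2)), zero_add]; rfl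

lemma key_mp : ∫ x in Iic (0:ℝ), ∫ y in Ici (0:ℝ), Real.exp (-(x-y)^2/2) = 1 := by
  simp only [inner_mp]
  rw [show (fun x : ℝ => G (-x)) = fun x => G (-x) from rfl]
  rw [integral_comp_neg_Iic (0:ℝ) G, neg_zero, ← MeasureTheory.integral_Ici_eq_integral_Ioi]
  exact key1

lemma ae_ne_zero : ∀ᵐ (t : ℝ), t ≠ 0 := by
  rw [ae_iff]
  simp only [ne_eq, not_not, Set.setOf_eq_eq_singleton]
  exact Real.volume_singleton

theorem chi_pm_mp (m : ℕ) (hm : 2 ≤ m) (θ : ℝ) (hθ : θ ∈ Set.Ioo (-1 : ℝ) 1) :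
    (∫ x in Ici (0 : ℝ), ∫ y in Iic (0 : ℝ), (k θ x y) ^ m * p θ x y * μinv θ x)
      = (-1) ^ m * (Real.sqrt (2 * Real.pi))⁻¹ * (1 + θ) / (1 - θ) ^ (m - 1) ∧
    (∫ x in Iic (0 : ℝ), ∫ y in Ici (0 : ℝ), (k θ x y) ^ m * p θ x y * μinv θ x)
      = (Real.sqrt (2 * Real.pi))⁻¹ * (1 - θ) / (1 + θ) ^ (m - 1) := by
  obtain ⟨hθ1, hθ2⟩ := hθ
  have h1 : (1:ℝ) - θ ≠ 0 := by linarith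
  have h2 : (1:ℝ) + θ ≠ 0 := by linarith
  constructor
  · set Cp : ℝ := (-1) ^ m * (Real.sqrt (2 * Real.pi))⁻¹ * (1 + θ) / (1 - θ) ^ (m - 1) with hCp
    have hinner : ∀ x : ℝ, 0 < x →
        (∫ y in Iic (0:ℝ), (k θ x y) ^ m * p θ x y * μinv θ x)
          = Cp * ∫ y in Iic (0:ℝ), Real.exp (-(x-y)^2/2) := by
      intro x hx
      rw [← MeasureTheory.integral_const_mul]
      refine integral_congr_ae ?_
      filter_upwards [ae_restrict_mem measurableSet_Iic, ae_restrict_of_ae ae_ne_zero]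
        with y hy hy0
      have hy' : y < 0 := lt_of_le_of_ne hy hy0
      have hk : k θ x y = -(1-θ)⁻¹ := by
        rw [k, Real.sign_of_neg hy',
          max_eq_left (mul_nonpos_of_nonneg_of_nonpos hx.le hy'.le), mul_zero, Real.exp_zero]
        rw [show (-1:ℝ) * θ + 1 = 1 - θ by ring, neg_div, one_div]
      have hp : p θ x y = (Real.sqrt (2 * Real.pi))⁻¹ * ((1 - θ) * Real.exp (-(x-y)^2/2)) := by
        rw [p, if_neg (fun h => absurd h.2 (not_le.mpr hy')),
          if_neg (fun h => absurd h.1 (not_le.mpr hx)), if_pos hx.le]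
      have hμ : μinv θ x = 1 + θ := by rw [μinv, if_pos hx.le]
      rw [hk, hp, hμ, hCp]
      have hpow : ((1:ℝ) - θ) ^ (m - 1) * (1 - θ) = (1 - θ) ^ m := by
        rw [← pow_succ]; congr 1; omega
      rw [neg_pow, inv_pow]
      field_simp
      rw [← hpow]
      ring
    have houter : (∫ x in Ici (0:ℝ), ∫ y in Iic (0:ℝ), (k θ x y) ^ m * p θ x y * μinv θ x)
        = ∫ x in Ici (0:ℝ), Cp * ∫ y in Iic (0:ℝ), Real.exp (-(x-y)^2/2) := by
      refine integral_congr_ae ?_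
      filter_upwards [ae_restrict_mem measurableSet_Ici, ae_restrict_of_ae ae_ne_zero]
        with x hx hx0
      exact hinner x (lt_of_le_of_ne hx (Ne.symm hx0))
    rw [houter, MeasureTheory.integral_const_mul, key_pm, mul_one]
  · set Cm : ℝ := (Real.sqrt (2 * Real.pi))⁻¹ * (1 - θ) / (1 + θ) ^ (m - 1) with hCm
    have hinner : ∀ x : ℝ, x < 0 →
        (∫ y in Ici (0:ℝ), (k θ x y) ^ m * p θ x y * μinv θ x)
          = Cm * ∫ y in Ici (0:ℝ), Real.exp (-(x-y)^2/2) := by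
      intro x hx
      rw [← MeasureTheory.integral_const_mul]
      refine integral_congr_ae ?_
      filter_upwards [ae_restrict_mem measurableSet_Ici, ae_restrict_of_ae ae_ne_zero]
        with y hy hy0
      have hy' : 0 < y := lt_of_le_of_ne hy (Ne.symm hy0)
      have hk : k θ x y = (1+θ)⁻¹ := by
        rw [k, Real.sign_of_pos hy',
          max_eq_left (mul_nonpos_of_nonpos_of_nonneg hx.le hy'.le), mul_zero, Real.exp_zero]
        rw [show (1:ℝ) * θ + 1 = 1 + θ by ring, one_div]
      have hp : p θ x y = (Real.sqrt (2 * Real.pi))⁻¹ * ((1 + θ) * Real.exp (-(x-y)^2/2)) := by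
        rw [p, if_neg (fun h => absurd h.1 (not_le.mpr hx)),
          if_neg (fun h => absurd h.2 (not_le.mpr hy')), if_neg (not_le.mpr hx)]
      have hμ : μinv θ x = 1 - θ := by rw [μinv, if_neg (not_le.mpr hx)]
      rw [hk, hp, hμ, hCm]
      have hpow : ((1:ℝ) + θ) ^ (m - 1) * (1 + θ) = (1 + θ) ^ m := by
        rw [← pow_succ]; congr 1; omega
      rw [inv_pow]
      field_simp
      rw [← hpow]
      ring
    have houter : (∫ x in Iic (0:ℝ), ∫ y in Ici (0:ℝ), (k θ x y) ^ m * p θ x y * μinv θ x)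
        = ∫ x in Iic (0:ℝ), Cm * ∫ y in Ici (0:ℝ), Real.exp (-(x-y)^2/2) := by
      refine integral_congr_ae ?_
      filter_upwards [ae_restrict_mem measurableSet_Iic, ae_restrict_of_ae ae_ne_zero]
        with x hx hx0
      exact hinner x (lt_of_le_of_ne hx hx0)
    rw [houter, MeasureTheory.integral_const_mul, key_mp, mul_one]
end

section
/- For every integer n ≥ 2, the double integral α_n := ∫_0^∞ ∫_0^∞ exp(−(x²+y²)/2 − n·x·y) dx dy equals (n² − 1)^{−1/2}·log(n + √(n² − 1)), and this value lies in the open interval (0, 1). -/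
open Real MeasureTheory Set Filter Topology

lemma aux_mul_exp {b : ℝ} (hb : 0 < b) :
    ∫ r in Ioi (0:ℝ), r * Real.exp (-b * r ^ 2) = (2 * b)⁻¹ := by
  have hderiv : ∀ x ∈ Ici (0:ℝ),
      HasDerivAt (fun r : ℝ => -(2 * b)⁻¹ * Real.exp (-b * r ^ 2))
        (x * Real.exp (-b * x ^ 2)) x := by
    intro x _
    refine (((hasDerivAt_pow 2 x).const_mul (-b)).exp.const_mul (-(2 * b)⁻¹)).congr_deriv ?_
    field_simp
    ring
  have hint : IntegrableOn (fun x : ℝ => x * Real.exp (-b * x ^ 2)) (Ioi 0) :=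
    (integrable_mul_exp_neg_mul_sq hb).integrableOn
  have htend : Tendsto (fun r : ℝ => -(2 * b)⁻¹ * Real.exp (-b * r ^ 2)) atTop (𝓝 0) := by
    have h1 : Tendsto (fun r : ℝ => -b * r ^ 2) atTop atBot := by
      apply Tendsto.const_mul_atTop_of_neg (neg_lt_zero.mpr hb)
      exact tendsto_pow_atTop two_ne_zero
    have := (Real.tendsto_exp_atBot.comp h1).const_mul (-(2 * b)⁻¹)
    simpa using this
  have := integral_Ioi_of_hasDerivAt_of_tendsto' hderiv hint htend
  rw [this]
  simp [mul_comm]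


lemma aux_int_rat : ∀ (n : ℕ), 2 ≤ n →
    ∫ t in Ioi (0:ℝ), (1 + t ^ 2 + 2 * (n:ℝ) * t)⁻¹
      = (Real.sqrt ((n : ℝ) ^ 2 - 1))⁻¹ * Real.log ((n : ℝ) + Real.sqrt ((n : ℝ) ^ 2 - 1)) := by
  intro n hn
  have hn2 : (2:ℝ) ≤ (n:ℝ) := by exact_mod_cast hn
  set s : ℝ := Real.sqrt ((n:ℝ) ^ 2 - 1) with hs_def
  have hs2 : s ^ 2 = (n:ℝ) ^ 2 - 1 := Real.sq_sqrt (by nlinarith)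
  have hs_pos : 0 < s := Real.sqrt_pos.mpr (by nlinarith)
  have hsn : s < (n:ℝ) := by nlinarith
  set F : ℝ → ℝ := fun t => (2 * s)⁻¹ * (Real.log (t + ((n:ℝ) - s)) - Real.log (t + ((n:ℝ) + s)))
    with hF_def
  have hderiv : ∀ t ∈ Ici (0:ℝ), HasDerivAt F ((1 + t ^ 2 + 2 * (n:ℝ) * t)⁻¹) t := by
    intro t ht
    have ht0 : (0:ℝ) ≤ t := ht
    have h1 : (0:ℝ) < t + ((n:ℝ) - s) := by linarith
    have h2 : (0:ℝ) < t + ((n:ℝ) + s) := by linarith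
    have hl1 : HasDerivAt (fun t : ℝ => Real.log (t + ((n:ℝ) - s))) (1 / (t + ((n:ℝ) - s))) t :=
      ((hasDerivAt_id t).add_const _).log h1.ne'
    have hl2 : HasDerivAt (fun t : ℝ => Real.log (t + ((n:ℝ) + s))) (1 / (t + ((n:ℝ) + s))) t :=
      ((hasDerivAt_id t).add_const _).log h2.ne'
    have := (hl1.sub hl2).const_mul ((2 * s)⁻¹)
    refine this.congr_deriv ?_
    have hd : (0:ℝ) < 1 + t ^ 2 + 2 * (n:ℝ) * t := by nlinarith
    field_simp
    nlinarith [hs2, sq_nonneg t]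
  have hint : IntegrableOn (fun t : ℝ => (1 + t ^ 2 + 2 * (n:ℝ) * t)⁻¹) (Ioi 0) := by
    apply Integrable.mono' (g := fun t : ℝ => (1 + t ^ 2)⁻¹)
      (integrable_inv_one_add_sq.restrict)
    · exact (by fun_prop : Measurable fun t : ℝ => (1 + t ^ 2 + 2 * (n:ℝ) * t)⁻¹).aestronglyMeasurable
    · filter_upwards [ae_restrict_mem measurableSet_Ioi] with t (ht : (0:ℝ) < t)
      have h1 : (0:ℝ) < 1 + t ^ 2 := by positivity
      have h2 : (0:ℝ) < 1 + t ^ 2 + 2 * (n:ℝ) * t := by nlinarith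
      rw [Real.norm_eq_abs, abs_of_pos (by positivity)]
      apply inv_anti₀ h1
      nlinarith
  have htend : Tendsto F atTop (𝓝 0) := by
    have hq : Tendsto (fun t : ℝ => (t + ((n:ℝ) - s)) / (t + ((n:ℝ) + s))) atTop (𝓝 1) := by
      have hb : Tendsto (fun t : ℝ => t + ((n:ℝ) + s)) atTop atTop :=
        tendsto_atTop_add_const_right _ _ tendsto_id
      have h0 : Tendsto (fun t : ℝ => (-(2*s)) / (t + ((n:ℝ) + s))) atTop (𝓝 0) :=
        tendsto_const_nhds.div_atTop hb
      have := h0.const_add 1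
      rw [add_zero] at this
      apply this.congr'
      filter_upwards [eventually_ge_atTop (0:ℝ)] with t ht
      have h2 : (0:ℝ) < t + ((n:ℝ) + s) := by linarith
      field_simp
      ring
    have hlog : Tendsto (fun t : ℝ => Real.log ((t + ((n:ℝ) - s)) / (t + ((n:ℝ) + s))))
        atTop (𝓝 0) := by
      have := (Real.continuousAt_log one_ne_zero).tendsto.comp hq
      simpa [Function.comp_def] using this
    have : Tendsto F atTop (𝓝 ((2*s)⁻¹ * 0)) := by
      apply Tendsto.congr' _ (hlog.const_mul ((2*s)⁻¹))
      filter_upwards [eventually_ge_atTop (0:ℝ)] with t ht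
      have h1 : (0:ℝ) < t + ((n:ℝ) - s) := by linarith
      have h2 : (0:ℝ) < t + ((n:ℝ) + s) := by linarith
      rw [hF_def]
      simp [Real.log_div h1.ne' h2.ne']
    simpa using this
  have key := integral_Ioi_of_hasDerivAt_of_tendsto' hderiv hint htend
  rw [key, hF_def]
  have hmul : ((n:ℝ) - s) * ((n:ℝ) + s) = 1 := by nlinarith
  have hinv : (n:ℝ) - s = ((n:ℝ) + s)⁻¹ := eq_inv_of_mul_eq_one_left hmul
  have hns : (0:ℝ) < (n:ℝ) + s := by linarith
  simp only [zero_add]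
  rw [hinv, Real.log_inv]
  field_simp
  ring

theorem alpha_n_value (n : ℕ) (hn : 2 ≤ n) :
    (∫ x in Ioi (0 : ℝ), ∫ y in Ioi (0 : ℝ),
        Real.exp (-(x ^ 2 + y ^ 2) / 2 - (n : ℝ) * x * y))
      = (Real.sqrt ((n : ℝ) ^ 2 - 1))⁻¹ * Real.log ((n : ℝ) + Real.sqrt ((n : ℝ) ^ 2 - 1)) ∧
    (∫ x in Ioi (0 : ℝ), ∫ y in Ioi (0 : ℝ),
        Real.exp (-(x ^ 2 + y ^ 2) / 2 - (n : ℝ) * x * y)) ∈ Set.Ioo (0 : ℝ) 1 := by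
  have hn2 : (2:ℝ) ≤ (n:ℝ) := by exact_mod_cast hn
  set f2 : ℝ → ℝ → ℝ := fun x t => x * Real.exp (-((1 + t ^ 2 + 2 * (n:ℝ) * t) / 2) * x ^ 2)
    with hf2
  -- Step A : inner substitution y = x * t
  have stepA : (∫ x in Ioi (0 : ℝ), ∫ y in Ioi (0 : ℝ),
        Real.exp (-(x ^ 2 + y ^ 2) / 2 - (n : ℝ) * x * y))
      = ∫ x in Ioi (0:ℝ), ∫ t in Ioi (0:ℝ), f2 x t := by
    apply setIntegral_congr_fun measurableSet_Ioi
    intro x hx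
    dsimp only
    have hx0 : (0:ℝ) < x := hx
    have step := integral_comp_mul_left_Ioi
      (fun y => Real.exp (-(x ^ 2 + y ^ 2) / 2 - (n:ℝ) * x * y)) 0 hx0
    simp only [mul_zero, smul_eq_mul] at step
    have h1 : (∫ y in Ioi (0:ℝ), Real.exp (-(x ^ 2 + y ^ 2) / 2 - (n:ℝ) * x * y))
        = x * ∫ t in Ioi (0:ℝ),
            Real.exp (-(x ^ 2 + (x * t) ^ 2) / 2 - (n:ℝ) * x * (x * t)) := by
      rw [step]
      rw [mul_inv_cancel_left₀ hx0.ne']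
    rw [h1, ← integral_const_mul]
    apply setIntegral_congr_fun measurableSet_Ioi
    intro t ht
    show x * Real.exp (-(x ^ 2 + (x * t) ^ 2) / 2 - (n:ℝ) * x * (x * t))
        = x * Real.exp (-((1 + t ^ 2 + 2 * (n:ℝ) * t) / 2) * x ^ 2)
    rw [show (-(x ^ 2 + (x * t) ^ 2) / 2 - (n:ℝ) * x * (x * t))
        = (-((1 + t ^ 2 + 2 * (n:ℝ) * t) / 2) * x ^ 2) by ring]
  -- Step B : integrability on the product
  have hcont : Continuous (Function.uncurry f2) := by
    apply Continuous.mul continuous_fst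
    apply Real.continuous_exp.comp
    fun_prop
  have meas : AEStronglyMeasurable (Function.uncurry f2)
      ((volume.restrict (Ioi (0:ℝ))).prod (volume.restrict (Ioi (0:ℝ)))) :=
    hcont.aestronglyMeasurable
  have h_int : Integrable (Function.uncurry f2)
      ((volume.restrict (Ioi (0:ℝ))).prod (volume.restrict (Ioi (0:ℝ)))) := by
    rw [integrable_prod_iff meas]
    simp only [Function.uncurry_apply_pair]
    constructor
    · filter_upwards [ae_restrict_mem measurableSet_Ioi] with x (hx : (0:ℝ) < x)
      apply Integrable.mono'
        (g := fun t : ℝ => x * Real.exp (-(x ^ 2 / 2) * t ^ 2))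
        (((integrable_exp_neg_mul_sq (div_pos (pow_pos hx 2) two_pos)).const_mul x).restrict)
      · exact (Continuous.aestronglyMeasurable (by fun_prop))
      · filter_upwards [ae_restrict_mem measurableSet_Ioi] with t (ht : (0:ℝ) < t)
        rw [Real.norm_eq_abs, abs_of_nonneg (by positivity)]
        apply mul_le_mul_of_nonneg_left _ hx.le
        apply Real.exp_le_exp.2
        have hnt : (0:ℝ) ≤ (n:ℝ) * t := by positivity
        nlinarith [sq_nonneg x, mul_nonneg hnt (sq_nonneg x)]
    · set C := ∫ u in Ioi (0:ℝ), Real.exp (-(1/2) * u ^ 2) with hC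
      have hC0 : 0 ≤ C := setIntegral_nonneg measurableSet_Ioi (fun u _ => (Real.exp_pos _).le)
      apply Integrable.mono'
        (g := fun x : ℝ => C * Real.exp (-(1/2) * x ^ 2))
        (((integrable_exp_neg_mul_sq (by norm_num : (0:ℝ) < 1/2)).const_mul C).restrict)
      · exact meas.norm.integral_prod_right'
      · filter_upwards [ae_restrict_mem measurableSet_Ioi] with x (hx : (0:ℝ) < x)
        have hnn : (0:ℝ) ≤ ∫ t in Ioi (0:ℝ), ‖f2 x t‖ :=
          integral_nonneg fun t => norm_nonneg _
        rw [Real.norm_eq_abs, abs_of_nonneg hnn]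
        have hb_int : IntegrableOn
            (fun t : ℝ => (x * Real.exp (-(1/2) * x ^ 2)) * Real.exp (-(x ^ 2 / 2) * t ^ 2))
            (Ioi 0) :=
          ((integrable_exp_neg_mul_sq (div_pos (pow_pos hx 2) two_pos)).const_mul
            _).integrableOn
        have hle : (∫ t in Ioi (0:ℝ), ‖f2 x t‖)
            ≤ ∫ t in Ioi (0:ℝ), (x * Real.exp (-(1/2) * x ^ 2)) * Real.exp (-(x ^ 2 / 2) * t ^ 2) := by
          apply integral_mono_of_nonneg (Filter.Eventually.of_forall fun t => norm_nonneg _) hb_int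
          filter_upwards [ae_restrict_mem measurableSet_Ioi] with t (ht : (0:ℝ) < t)
          rw [hf2, Real.norm_eq_abs, abs_of_nonneg (by positivity)]
          rw [mul_assoc, ← Real.exp_add]
          apply mul_le_mul_of_nonneg_left _ hx.le
          apply Real.exp_le_exp.2
          have hnt : (0:ℝ) ≤ (n:ℝ) * t := by positivity
          nlinarith [mul_nonneg hnt (sq_nonneg x)]
        refine hle.trans (le_of_eq ?_)
        rw [integral_const_mul]
        have sub := integral_comp_mul_left_Ioi (fun u => Real.exp (-(1/2) * u ^ 2)) 0 hx
        simp only [mul_zero, smul_eq_mul] at sub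
        have : (∫ t in Ioi (0:ℝ), Real.exp (-(x ^ 2 / 2) * t ^ 2))
            = ∫ t in Ioi (0:ℝ), Real.exp (-(1/2) * (x * t) ^ 2) := by
          apply setIntegral_congr_fun measurableSet_Ioi
          intro t ht
          show Real.exp (-(x ^ 2 / 2) * t ^ 2) = Real.exp (-(1/2) * (x * t) ^ 2)
          rw [show (-(x ^ 2 / 2) * t ^ 2) = (-(1/2) * (x * t) ^ 2) by ring]
        rw [this, sub, ← hC]
        field_simp
  -- Step B' : swap
  have hswap := integral_integral_swap h_int
  -- Step C : inner x-integral
  have stepC : (∫ t in Ioi (0:ℝ), ∫ x in Ioi (0:ℝ), f2 x t)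
      = ∫ t in Ioi (0:ℝ), (1 + t ^ 2 + 2 * (n:ℝ) * t)⁻¹ := by
    apply setIntegral_congr_fun measurableSet_Ioi
    intro t ht
    have hc : (0:ℝ) < (1 + t ^ 2 + 2 * (n:ℝ) * t) / 2 := by
      have ht0 : (0:ℝ) < t := ht
      have hnt : (0:ℝ) ≤ (n:ℝ) * t := by positivity
      nlinarith [sq_nonneg t]
    have := aux_mul_exp hc
    rw [hf2]
    simp only []
    rw [this]
    rw [mul_div_cancel₀]
    norm_num
  have hval : (∫ x in Ioi (0 : ℝ), ∫ y in Ioi (0 : ℝ),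
        Real.exp (-(x ^ 2 + y ^ 2) / 2 - (n : ℝ) * x * y))
      = (Real.sqrt ((n : ℝ) ^ 2 - 1))⁻¹ * Real.log ((n : ℝ) + Real.sqrt ((n : ℝ) ^ 2 - 1)) := by
    rw [stepA]
    rw [show (∫ x in Ioi (0:ℝ), ∫ t in Ioi (0:ℝ), f2 x t)
        = ∫ t in Ioi (0:ℝ), ∫ x in Ioi (0:ℝ), f2 x t from hswap]
    rw [stepC, aux_int_rat n hn]
  refine ⟨hval, ?_⟩
  rw [mem_Ioo, hval]
  set s : ℝ := Real.sqrt ((n:ℝ) ^ 2 - 1) with hs_def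
  have hs2 : s ^ 2 = (n:ℝ) ^ 2 - 1 := Real.sq_sqrt (by nlinarith)
  have hs_pos : 0 < s := Real.sqrt_pos.mpr (by nlinarith)
  have hsn : s < (n:ℝ) := by nlinarith
  constructor
  · have hlogpos : 0 < Real.log ((n:ℝ) + s) := Real.log_pos (by linarith)
    positivity
  · have hlog : Real.log ((n:ℝ) + s) < s := by
      have h1 : Real.log ((n:ℝ) + s) < Real.log (2 * (n:ℝ)) :=
        Real.log_lt_log (by linarith) (by linarith)
      have h2 : Real.log (2 * (n:ℝ)) = Real.log 2 + Real.log (n:ℝ) :=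
        Real.log_mul two_ne_zero (by positivity)
      have h3 : Real.log (n:ℝ) ≤ (n:ℝ) - 1 := Real.log_le_sub_one_of_pos (by positivity)
      have h4 : Real.log 2 + ((n:ℝ) - 1) ≤ s := by
        have hx0 : (0:ℝ) ≤ Real.log 2 + ((n:ℝ) - 1) := by
          have := Real.log_nonneg (by norm_num : (1:ℝ) ≤ 2)
          linarith
        rw [hs_def, Real.le_sqrt hx0 (by nlinarith)]
        nlinarith [Real.log_two_lt_d9, Real.log_two_gt_d9]
      linarith
    calc (s⁻¹ : ℝ) * Real.log ((n:ℝ) + s) < s⁻¹ * s :=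
          (mul_lt_mul_of_pos_left hlog (inv_pos.mpr hs_pos))
      _ = 1 := inv_mul_cancel₀ hs_pos.ne'
end

section
/- For every integer m ≥ 2, the quantity √(2π)·χ_m^{++}(0) := ∫_0^∞ ∫_0^∞ exp(−(x+y)²/2)·exp(−(2m−2)·x·y) dx dy equals (2√(m(m−1)))^{−1}·log(2m − 1 + 2√(m(m−1))), which lies in (0,1). -/
open Real MeasureTheory Set Filter

-- Step 2: Gaussian x-integral
lemma gauss_aux {c : ℝ} (hc : 0 < c) :
    ∫ x in Ioi (0:ℝ), x * Real.exp (-c * x ^ 2) = (2 * c)⁻¹ := by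
  have hderiv : ∀ x ∈ Ici (0:ℝ), HasDerivAt (fun x => -(2*c)⁻¹ * Real.exp (-c * x ^ 2))
      (x * Real.exp (-c * x ^ 2)) x := by
    intro x _
    have h1 : HasDerivAt (fun x : ℝ => -c * x ^ 2) (-c * (2 * x)) x := by
      simpa using ((hasDerivAt_pow 2 x).const_mul (-c))
    have := (h1.exp).const_mul (-(2*c)⁻¹)
    refine this.congr_deriv ?_
    field_simp
  have hint : IntegrableOn (fun x => x * Real.exp (-c * x ^ 2)) (Ioi 0) :=
    (integrable_mul_exp_neg_mul_sq hc).integrableOn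
  have htend : Tendsto (fun x => -(2*c)⁻¹ * Real.exp (-c * x ^ 2)) atTop (nhds 0) := by
    have h2 : Tendsto (fun x : ℝ => -c * x ^ 2) atTop atBot := by
      apply Filter.Tendsto.const_mul_atTop_of_neg (by linarith : -c < 0)
      exact tendsto_pow_atTop (by norm_num)
    have := (Real.tendsto_exp_atBot.comp h2).const_mul (-(2*c)⁻¹)
    simpa using this
  have := integral_Ioi_of_hasDerivAt_of_tendsto' hderiv hint htend
  rw [this]
  simp

lemma ratint {a : ℝ} (ha : 1 < a) :
    ∫ u in Ioi (0:ℝ), (u ^ 2 + 2 * a * u + 1)⁻¹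
      = (Real.sqrt (a ^ 2 - 1))⁻¹ * Real.log (a + Real.sqrt (a ^ 2 - 1)) := by
  set b := Real.sqrt (a ^ 2 - 1) with hbdef
  have hb2 : b ^ 2 = a ^ 2 - 1 := Real.sq_sqrt (by nlinarith)
  have hb0 : 0 < b := Real.sqrt_pos.2 (by nlinarith)
  have hba : b < a := by nlinarith [hb2, hb0]
  have hmul : (a - b) * (a + b) = 1 := by nlinarith [hb2]
  have hab0 : 0 < a - b := by linarith
  have hab1 : 0 < a + b := by linarith
  set F : ℝ → ℝ := fun u => (2*b)⁻¹ * (Real.log (u + (a - b)) - Real.log (u + (a + b))) with hF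
  have hderiv : ∀ u ∈ Ici (0:ℝ), HasDerivAt F ((u ^ 2 + 2 * a * u + 1)⁻¹) u := by
    intro u hu
    have hu0 : (0:ℝ) ≤ u := hu
    have hp : 0 < u + (a - b) := by linarith
    have hq : 0 < u + (a + b) := by linarith
    have h1 : HasDerivAt (fun u : ℝ => Real.log (u + (a - b))) (u + (a-b))⁻¹ u := by
      exact ((Real.hasDerivAt_log hp.ne').comp u ((hasDerivAt_id u).add_const (a-b))).congr_deriv (mul_one _)
    have h2 : HasDerivAt (fun u : ℝ => Real.log (u + (a + b))) (u + (a+b))⁻¹ u := by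
      exact ((Real.hasDerivAt_log hq.ne').comp u ((hasDerivAt_id u).add_const (a+b))).congr_deriv (mul_one _)
    have := ((h1.sub h2).const_mul ((2*b)⁻¹))
    refine this.congr_deriv ?_
    have hden : u ^ 2 + 2 * a * u + 1 = (u + (a-b)) * (u + (a+b)) := by nlinarith [hb2]
    rw [hden]
    field_simp
    ring
  have hint : IntegrableOn (fun u : ℝ => (u ^ 2 + 2 * a * u + 1)⁻¹) (Ioi 0) := by
    have hcont : ContinuousOn (fun u : ℝ => (u ^ 2 + 2 * a * u + 1)⁻¹) (Ioi 0) := by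
      apply ContinuousOn.inv₀ (by fun_prop)
      intro u hu
      have : (0:ℝ) < u := hu
      nlinarith
    refine Integrable.mono' (g := fun u => (1 + u ^ 2)⁻¹)
      integrable_inv_one_add_sq.integrableOn
      (hcont.aestronglyMeasurable measurableSet_Ioi) ?_
    filter_upwards [ae_restrict_mem measurableSet_Ioi] with u hu
    have hu0 : (0:ℝ) < u := hu
    rw [Real.norm_eq_abs, abs_of_nonneg (by positivity)]
    apply inv_anti₀ (by positivity)
    nlinarith
  have htend : Tendsto F atTop (nhds 0) := by
    have h1 : Tendsto (fun u : ℝ => (u + (a - b)) / (u + (a + b))) atTop (nhds 1) := by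
      have := Filter.Tendsto.div_atTop (f := fun u : ℝ => (a-b) - (a+b)) (l := atTop)
        tendsto_const_nhds (tendsto_atTop_add_const_right atTop (a+b) tendsto_id)
      have h2 : Tendsto (fun u : ℝ => 1 + ((a-b) - (a+b)) / (u + (a+b))) atTop (nhds (1 + 0)) :=
        tendsto_const_nhds.add this
      rw [add_zero] at h2
      apply h2.congr'
      filter_upwards [eventually_gt_atTop 0] with u hu
      field_simp
      ring
    have h2 : Tendsto (fun u : ℝ => Real.log ((u + (a - b)) / (u + (a + b)))) atTop (nhds 0) := by
      have := (Real.continuousAt_log (by norm_num : (1:ℝ) ≠ 0)).tendsto.comp h1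
      simpa [Function.comp_def] using this
    have h3 : Tendsto F atTop (nhds ((2*b)⁻¹ * 0)) := by
      apply Filter.Tendsto.const_mul
      apply h2.congr'
      filter_upwards [eventually_gt_atTop 0] with u hu
      rw [Real.log_div (by positivity) (by positivity)]
    simpa using h3
  have := integral_Ioi_of_hasDerivAt_of_tendsto' hderiv hint htend
  rw [this, hF]
  have hainv : a - b = (a + b)⁻¹ := by
    field_simp
    linarith [hmul]
  simp only [zero_add]
  rw [hainv, Real.log_inv]
  field_simp
  ring

lemma key {a : ℝ} (ha : 1 < a) :
    ∫ x in Ioi (0:ℝ), ∫ y in Ioi (0:ℝ), Real.exp (-(x ^ 2 + 2*a*x*y + y ^ 2) / 2)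
      = (Real.sqrt (a ^ 2 - 1))⁻¹ * Real.log (a + Real.sqrt (a ^ 2 - 1)) := by
  set G : ℝ → ℝ → ℝ := fun x u => x * Real.exp (-((u ^ 2 + 2*a*u + 1)/2) * x ^ 2) with hG
  have hGcont : Continuous (Function.uncurry G) := by
    apply Continuous.mul continuous_fst
    apply Real.continuous_exp.comp
    fun_prop
  -- substitution in inner integral
  have hsub : ∀ x ∈ Ioi (0:ℝ),
      ∫ y in Ioi (0:ℝ), Real.exp (-(x ^ 2 + 2*a*x*y + y ^ 2) / 2) = ∫ u in Ioi (0:ℝ), G x u := by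
    intro x hx
    have hx0 : (0:ℝ) < x := hx
    have h := integral_comp_mul_left_Ioi
      (fun y => Real.exp (-(x ^ 2 + 2*a*x*y + y ^ 2) / 2)) 0 hx0
    rw [mul_zero, smul_eq_mul] at h
    have h2 : ∫ y in Ioi (0:ℝ), Real.exp (-(x ^ 2 + 2*a*x*y + y ^ 2) / 2)
        = x * ∫ u in Ioi (0:ℝ), Real.exp (-(x ^ 2 + 2*a*x*(x*u) + (x*u) ^ 2) / 2) := by
      rw [h]; field_simp
    rw [h2, ← integral_const_mul]
    apply setIntegral_congr_fun measurableSet_Ioi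
    intro u hu
    rw [hG]
    ring_nf
  -- integrability on the product
  have hGm : AEStronglyMeasurable (Function.uncurry G)
      ((volume.restrict (Ioi 0)).prod (volume.restrict (Ioi 0))) :=
    hGcont.aestronglyMeasurable
  have hint : Integrable (Function.uncurry G)
      ((volume.restrict (Ioi 0)).prod (volume.restrict (Ioi 0))) := by
    rw [integrable_prod_iff hGm]
    constructor
    · filter_upwards [ae_restrict_mem measurableSet_Ioi] with x hx
      have hx0 : (0:ℝ) < x := hx
      refine Integrable.mono' (g := fun u => x * Real.exp (-(x ^ 2/2) * u ^ 2))
        (((integrable_exp_neg_mul_sq (by positivity)).const_mul x).integrableOn) ?_ ?_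
      · exact (Continuous.aestronglyMeasurable (by fun_prop))
      · filter_upwards [ae_restrict_mem measurableSet_Ioi] with u hu
        have hu0 : (0:ℝ) < u := hu
        simp only [hG, Function.uncurry_apply_pair]
        rw [Real.norm_eq_abs, abs_of_nonneg (by positivity)]
        apply mul_le_mul_of_nonneg_left _ hx0.le
        apply Real.exp_le_exp.2
        nlinarith [mul_nonneg (sq_nonneg x) (by nlinarith : (0:ℝ) ≤ 2*a*u+1)]
    · refine Integrable.mono' (g := fun x => Real.sqrt (2*π)/2 * Real.exp (-(1/2 : ℝ) * x ^ 2))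
        (((integrable_exp_neg_mul_sq (by norm_num)).const_mul _).integrableOn) ?_ ?_
      · exact (hGm.norm).integral_prod_right'
      · filter_upwards [ae_restrict_mem measurableSet_Ioi] with x hx
        have hx0 : (0:ℝ) < x := hx
        simp only [Function.uncurry_apply_pair]
        have hnn : 0 ≤ ∫ u in Ioi (0:ℝ), ‖G x u‖ :=
          integral_nonneg fun u => norm_nonneg _
        rw [Real.norm_eq_abs, abs_of_nonneg hnn]
        have hbound : ∫ u in Ioi (0:ℝ), ‖G x u‖
            ≤ ∫ u in Ioi (0:ℝ), (x * Real.exp (-(x ^ 2/2))) * Real.exp (-(x ^ 2/2) * u ^ 2) := by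
          apply integral_mono_of_nonneg
          · filter_upwards with u; exact norm_nonneg _
          · exact ((integrable_exp_neg_mul_sq (by positivity)).const_mul _).integrableOn
          · filter_upwards [ae_restrict_mem measurableSet_Ioi] with u hu
            have hu0 : (0:ℝ) < u := hu
            simp only [hG]
            rw [Real.norm_eq_abs, abs_of_nonneg (by positivity)]
            rw [show x * Real.exp (-(x ^ 2/2)) * Real.exp (-(x ^ 2/2) * u ^ 2)
              = x * Real.exp (-(x ^ 2/2) + -(x ^ 2/2) * u ^ 2) from by
                rw [mul_assoc, ← Real.exp_add]]
            apply mul_le_mul_of_nonneg_left _ hx0.le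
            apply Real.exp_le_exp.2
            nlinarith [mul_nonneg (mul_nonneg (sq_nonneg x) (le_of_lt (lt_trans one_pos ha))) hu0.le]
        calc ∫ u in Ioi (0:ℝ), ‖G x u‖
            ≤ ∫ u in Ioi (0:ℝ), (x * Real.exp (-(x ^ 2/2))) * Real.exp (-(x ^ 2/2) * u ^ 2) :=
              hbound
          _ = (x * Real.exp (-(x ^ 2/2))) * (Real.sqrt (π / (x ^ 2/2)) / 2) := by
              rw [integral_const_mul, integral_gaussian_Ioi]
          _ = Real.sqrt (2*π)/2 * Real.exp (-(1/2 : ℝ) * x ^ 2) := by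
              rw [show π / (x ^ 2/2) = (2*π) / x ^ 2 by ring,
                Real.sqrt_div (by positivity) (x ^ 2), Real.sqrt_sq hx0.le]
              field_simp
  -- swap and compute
  rw [setIntegral_congr_fun measurableSet_Ioi hsub, integral_integral_swap hint]
  have hinner : ∀ u ∈ Ioi (0:ℝ), ∫ x in Ioi (0:ℝ), G x u = (u ^ 2 + 2*a*u + 1)⁻¹ := by
    intro u hu
    have hu0 : (0:ℝ) < u := hu
    have hc : (0:ℝ) < (u ^ 2 + 2*a*u + 1)/2 := by positivity
    have := gauss_aux hc
    rw [hG]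
    simp only []
    rw [this]
    field_simp
  rw [setIntegral_congr_fun measurableSet_Ioi hinner, ratint ha]

theorem chi_pp_zero_value (m : ℕ) (hm : 2 ≤ m) :
    (∫ x in Ioi (0 : ℝ), ∫ y in Ioi (0 : ℝ),
        Real.exp (-(x + y) ^ 2 / 2) * Real.exp (-((2 : ℝ) * m - 2) * x * y))
      = (2 * Real.sqrt ((m : ℝ) * ((m : ℝ) - 1)))⁻¹ *
          Real.log (2 * (m : ℝ) - 1 + 2 * Real.sqrt ((m : ℝ) * ((m : ℝ) - 1))) ∧
    (∫ x in Ioi (0 : ℝ), ∫ y in Ioi (0 : ℝ),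
        Real.exp (-(x + y) ^ 2 / 2) * Real.exp (-((2 : ℝ) * m - 2) * x * y))
      ∈ Set.Ioo (0 : ℝ) 1 := by
  have hm2 : (2:ℝ) ≤ (m:ℝ) := by exact_mod_cast hm
  set a : ℝ := 2 * (m:ℝ) - 1 with hadef
  have ha3 : (3:ℝ) ≤ a := by simp [hadef]; linarith
  have ha : (1:ℝ) < a := by linarith
  have hsq : Real.sqrt (a ^ 2 - 1) = 2 * Real.sqrt ((m:ℝ) * ((m:ℝ) - 1)) := by
    rw [show a ^ 2 - 1 = 2 ^ 2 * ((m:ℝ) * ((m:ℝ) - 1)) by rw [hadef]; ring,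
      Real.sqrt_mul (by positivity), Real.sqrt_sq (by norm_num : (0:ℝ) ≤ 2)]
  have hcong : (∫ x in Ioi (0 : ℝ), ∫ y in Ioi (0 : ℝ),
        Real.exp (-(x + y) ^ 2 / 2) * Real.exp (-((2 : ℝ) * m - 2) * x * y))
      = ∫ x in Ioi (0:ℝ), ∫ y in Ioi (0:ℝ), Real.exp (-(x ^ 2 + 2*a*x*y + y ^ 2) / 2) := by
    apply setIntegral_congr_fun measurableSet_Ioi
    intro x _
    apply setIntegral_congr_fun measurableSet_Ioi
    intro y _
    simp only
    rw [← Real.exp_add]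
    congr 1
    rw [hadef]
    ring
  have hval := key ha
  rw [hcong, hval, hsq]
  refine ⟨rfl, ?_⟩
  -- membership in Ioo 0 1
  set b : ℝ := 2 * Real.sqrt ((m:ℝ) * ((m:ℝ) - 1)) with hbdef
  have hb2 : b ^ 2 = a ^ 2 - 1 := by
    rw [← hsq, Real.sq_sqrt (by nlinarith)]
  have hb0 : 0 < b := by
    rw [← hsq]
    exact Real.sqrt_pos.2 (by nlinarith)
  constructor
  · have hlog : 0 < Real.log (a + b) := Real.log_pos (by linarith)
    positivity
  · rw [inv_mul_lt_iff₀ hb0, mul_one]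
    rw [Real.log_lt_iff_lt_exp (by linarith)]
    have := Real.quadratic_le_exp_of_nonneg hb0.le
    nlinarith [hb2, ha3]
end

section
/- For every integer m ≥ 1 and every θ ∈ (0,1), χ_{2m+1}(θ) < 0. In particular, the coefficient ξ_{2m}(θ) = (2m)!·χ_{2m+1}(θ) is nonzero for θ ∈ (0,1). -/
open Real MeasureTheory Set

/-- `χ_m^{++}(θ)`. -/
noncomputable def chiPP (m : ℕ) (θ : ℝ) : ℝ :=
  ∫ x in Ici (0 : ℝ), ∫ y in Ici (0 : ℝ), (k θ x y) ^ m * p θ x y * μinv θ x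

/-- `χ_m^{--}(θ)`. -/
noncomputable def chiMM (m : ℕ) (θ : ℝ) : ℝ :=
  ∫ x in Iic (0 : ℝ), ∫ y in Iic (0 : ℝ), (k θ x y) ^ m * p θ x y * μinv θ x

/-- `χ_m^{+-}(θ)`. -/
noncomputable def chiPM (m : ℕ) (θ : ℝ) : ℝ :=
  ∫ x in Ici (0 : ℝ), ∫ y in Iic (0 : ℝ), (k θ x y) ^ m * p θ x y * μinv θ x

/-- `χ_m^{-+}(θ)`. -/
noncomputable def chiMP (m : ℕ) (θ : ℝ) : ℝ :=
  ∫ x in Iic (0 : ℝ), ∫ y in Ici (0 : ℝ), (k θ x y) ^ m * p θ x y * μinv θ x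

/-- `χ_m(θ)`, the sum over the four quadrants. -/
noncomputable def chi (m : ℕ) (θ : ℝ) : ℝ :=
  chiPP m θ + chiMM m θ + chiPM m θ + chiMP m θ

/-- `ζ_m(θ)`. -/
noncomputable def zeta (m : ℕ) (θ : ℝ) : ℝ :=
  chiPP m θ + chiPM m θ - chiMM m θ - chiMP m θ


noncomputable def core (n : ℕ) (t x y : ℝ) : ℝ :=
  ((t + Real.exp (2 * (x * y)))⁻¹) ^ n *
    (Real.exp (-(x - y) ^ 2 / 2) + t * Real.exp (-(x + y) ^ 2 / 2))

lemma core_meas (n : ℕ) (t : ℝ) : Measurable (fun q : ℝ × ℝ => core n t q.1 q.2) := by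
  unfold core; fun_prop

lemma gB_meas : Measurable (fun q : ℝ × ℝ => Real.exp (-(q.1 + q.2) ^ 2 / 2)) := by fun_prop

lemma one_le_E {x y : ℝ} (hx : 0 ≤ x) (hy : 0 ≤ y) : 1 ≤ Real.exp (2 * (x * y)) := by
  rw [show (1:ℝ) = Real.exp 0 by simp]
  exact Real.exp_le_exp.2 (by positivity)

lemma BE {x y : ℝ} :
    Real.exp (-(x + y) ^ 2 / 2) * Real.exp (2 * (x * y)) = Real.exp (-(x - y) ^ 2 / 2) := by
  rw [← Real.exp_add]; congr 1; ring

lemma BleA {x y : ℝ} (hx : 0 ≤ x) (hy : 0 ≤ y) :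
    Real.exp (-(x + y) ^ 2 / 2) ≤ Real.exp (-(x - y) ^ 2 / 2) :=
  Real.exp_le_exp.2 (by nlinarith [mul_nonneg hx hy])

lemma core_eq_div (n : ℕ) (t x y : ℝ) :
    core n t x y = (Real.exp (-(x - y) ^ 2 / 2) + t * Real.exp (-(x + y) ^ 2 / 2)) /
      (t + Real.exp (2 * (x * y))) ^ n := by
  rw [core, inv_pow]; ring

lemma core_nonneg {n : ℕ} {t x y : ℝ} (ht : -1 ≤ t) (ht1 : t ≤ 1)
    (hx : 0 ≤ x) (hy : 0 ≤ y) : 0 ≤ core n t x y := by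
  have hE := one_le_E hx hy
  have hB := Real.exp_pos (-(x + y) ^ 2 / 2)
  have hAB := BleA hx hy
  refine mul_nonneg (pow_nonneg (inv_nonneg.2 (by linarith)) n) ?_
  nlinarith

lemma core_mono1 {j : ℕ} {t x y : ℝ} (ht : 0 ≤ t) (hx : 0 ≤ x) (hy : 0 ≤ y) :
    core (j + 1) t x y ≤ core (j + 1) 0 x y := by
  set A := Real.exp (-(x - y) ^ 2 / 2) with hA
  set B := Real.exp (-(x + y) ^ 2 / 2) with hB
  set E := Real.exp (2 * (x * y)) with hE
  have hE1 : 1 ≤ E := one_le_E hx hy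
  have hA0 : 0 < A := Real.exp_pos _
  have hBE : B * E = A := BE
  rw [core_eq_div, core_eq_div]
  simp only [zero_mul, add_zero, zero_add]
  rw [div_le_div_iff₀ (by positivity) (by positivity)]
  have hpow : E ^ j ≤ (t + E) ^ j := pow_le_pow_left₀ (by linarith) (by linarith) j
  calc (A + t * B) * E ^ (j + 1) = (A * (t + E)) * E ^ j := by
        rw [pow_succ]; linear_combination (t * E ^ j) * hBE
    _ ≤ (A * (t + E)) * (t + E) ^ j :=
        mul_le_mul_of_nonneg_left hpow (mul_nonneg hA0.le (by linarith))
    _ = A * (t + E) ^ (j + 1) := by rw [pow_succ]; ring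

lemma core_mono2 {j : ℕ} {t x y : ℝ} (ht : 0 ≤ t) (ht1 : t < 1)
    (hx : 0 ≤ x) (hy : 0 ≤ y) :
    core (j + 1) 0 x y ≤ core (j + 1) (-t) x y := by
  set A := Real.exp (-(x - y) ^ 2 / 2) with hA
  set B := Real.exp (-(x + y) ^ 2 / 2) with hB
  set E := Real.exp (2 * (x * y)) with hE
  have hE1 : 1 ≤ E := one_le_E hx hy
  have hA0 : 0 < A := Real.exp_pos _
  have hBE : B * E = A := BE
  rw [core_eq_div, core_eq_div]
  simp only [zero_mul, add_zero, zero_add, neg_mul]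
  rw [div_le_div_iff₀ (by positivity) (pow_pos (by linarith) _)]
  have hpow : (-t + E) ^ j ≤ E ^ j := pow_le_pow_left₀ (by linarith) (by linarith) j
  calc A * (-t + E) ^ (j + 1) = (A * (-t + E) ^ j) * (-t + E) := by rw [pow_succ]; ring
    _ ≤ (A * E ^ j) * (-t + E) :=
        mul_le_mul_of_nonneg_right (mul_le_mul_of_nonneg_left hpow hA0.le) (by linarith)
    _ = (A + -(t * B)) * E ^ (j + 1) := by
        rw [pow_succ]; linear_combination (t * E ^ j) * hBE

lemma core_zero_le_gB {j : ℕ} {x y : ℝ} (hx : 0 ≤ x) (hy : 0 ≤ y) :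
    core (j + 1) 0 x y ≤ Real.exp (-(x + y) ^ 2 / 2) := by
  set A := Real.exp (-(x - y) ^ 2 / 2) with hA
  set B := Real.exp (-(x + y) ^ 2 / 2) with hB
  set E := Real.exp (2 * (x * y)) with hE
  have hE1 : 1 ≤ E := one_le_E hx hy
  have hB0 : 0 < B := Real.exp_pos _
  have hBE : B * E = A := BE
  rw [core_eq_div]
  simp only [zero_mul, add_zero, zero_add]
  rw [div_le_iff₀ (by positivity)]
  calc A = B * E := hBE.symm
    _ ≤ B * E ^ (j + 1) :=
        mul_le_mul_of_nonneg_left (le_self_pow₀ hE1 (Nat.succ_ne_zero j)) hB0.le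
    _ = B * E ^ (j + 1) := rfl

lemma core_zero_lt_gB {j : ℕ} {x y : ℝ} (hj : 1 ≤ j) (hx : 0 < x) (hy : 0 < y) :
    core (j + 1) 0 x y < Real.exp (-(x + y) ^ 2 / 2) := by
  set A := Real.exp (-(x - y) ^ 2 / 2) with hA
  set B := Real.exp (-(x + y) ^ 2 / 2) with hB
  set E := Real.exp (2 * (x * y)) with hE
  have hE1 : 1 < E := by
    rw [hE]; exact Real.one_lt_exp_iff.2 (by positivity)
  have hB0 : 0 < B := Real.exp_pos _
  have hBE : B * E = A := BE
  rw [core_eq_div]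
  simp only [zero_mul, add_zero, zero_add]
  rw [div_lt_iff₀ (by positivity)]
  calc A = B * E ^ 1 := by rw [pow_one]; exact hBE.symm
    _ < B * E ^ (j + 1) := by
        have : E ^ 1 < E ^ (j + 1) := pow_lt_pow_right₀ hE1 (by omega)
        exact mul_lt_mul_of_pos_left this hB0
    _ = B * E ^ (j + 1) := rfl

lemma core_neg_le_gauss {j : ℕ} {t x y : ℝ} (ht : 0 ≤ t) (ht1 : t < 1)
    (hx : 0 ≤ x) (hy : 0 ≤ y) :
    core (j + 1) (-t) x y ≤ ((1 - t)⁻¹) ^ (j + 1) * Real.exp (-(x + y) ^ 2 / 2) := by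
  set A := Real.exp (-(x - y) ^ 2 / 2) with hA
  set B := Real.exp (-(x + y) ^ 2 / 2) with hB
  set E := Real.exp (2 * (x * y)) with hE
  have hE1 : 1 ≤ E := one_le_E hx hy
  have hB0 : 0 < B := Real.exp_pos _
  have hA0 : 0 < A := Real.exp_pos _
  have hBE : B * E = A := BE
  have h1t : 0 < 1 - t := by linarith
  rw [core_eq_div]
  simp only [neg_mul]
  rw [show ((1 - t)⁻¹) ^ (j + 1) * B = B / (1 - t) ^ (j + 1) by
    rw [inv_pow]; ring]
  rw [div_le_div_iff₀ (pow_pos (by linarith) _) (by positivity)]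
  -- (A + -(t*B)) * (1-t)^(j+1) ≤ B * (-t+E)^(j+1)
  have key : (1 - t) * E ≤ -t + E := by nlinarith
  have hpow : ((1 - t) * E) ^ (j + 1) ≤ (-t + E) ^ (j + 1) :=
    pow_le_pow_left₀ (by positivity) key (j + 1)
  have hAB : A + -(t * B) ≤ A := by nlinarith
  calc (A + -(t * B)) * (1 - t) ^ (j + 1) ≤ A * (1 - t) ^ (j + 1) :=
        mul_le_mul_of_nonneg_right hAB (by positivity)
    _ = B * (E * (1 - t) ^ (j + 1)) := by rw [← hBE]; ring
    _ ≤ B * (E ^ (j + 1) * (1 - t) ^ (j + 1)) := by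
        refine mul_le_mul_of_nonneg_left (mul_le_mul_of_nonneg_right
          (le_self_pow₀ hE1 (Nat.succ_ne_zero j)) (by positivity)) hB0.le
    _ = B * ((1 - t) * E) ^ (j + 1) := by rw [mul_pow]; ring
    _ ≤ B * (-t + E) ^ (j + 1) := mul_le_mul_of_nonneg_left hpow hB0.le

lemma gB_le_prod {x y : ℝ} (hx : 0 ≤ x) (hy : 0 ≤ y) :
    Real.exp (-(x + y) ^ 2 / 2) ≤ Real.exp (-x ^ 2 / 2) * Real.exp (-y ^ 2 / 2) := by
  rw [← Real.exp_add]
  exact Real.exp_le_exp.2 (by nlinarith [mul_nonneg hx hy])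

lemma integrable_gauss : Integrable (fun y : ℝ => Real.exp (-y ^ 2 / 2)) := by
  have h : (fun y : ℝ => Real.exp (-y ^ 2 / 2)) = fun y => Real.exp (-(1/2 : ℝ) * y ^ 2) := by
    funext y; congr 1; ring
  rw [h]; exact integrable_exp_neg_mul_sq (by norm_num)

lemma aux_integrable {f : ℝ → ℝ → ℝ} (hf : Measurable (fun q : ℝ × ℝ => f q.1 q.2))
    {C : ℝ} (h0 : ∀ x y, 0 ≤ x → 0 ≤ y → 0 ≤ f x y)
    (hle : ∀ x y, 0 ≤ x → 0 ≤ y → f x y ≤ C * (Real.exp (-x ^ 2 / 2) * Real.exp (-y ^ 2 / 2))) :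
    (∀ x, 0 ≤ x → IntegrableOn (f x) (Ioi 0)) ∧
      IntegrableOn (fun x => ∫ y in Ioi 0, f x y) (Ioi 0) := by
  have hinner : ∀ x, 0 ≤ x → IntegrableOn (f x) (Ioi 0) := by
    intro x hx
    refine Integrable.mono' ((integrable_gauss.const_mul
      (C * Real.exp (-x ^ 2 / 2))).integrableOn)
      ((hf.comp (measurable_const.prodMk measurable_id)).aestronglyMeasurable)
      (((ae_restrict_iff' measurableSet_Ioi).2 (ae_of_all _ fun y hy => ?_)))
    rw [Real.norm_eq_abs, abs_of_nonneg (h0 x y hx hy.le)]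
    calc f x y ≤ C * (Real.exp (-x ^ 2 / 2) * Real.exp (-y ^ 2 / 2)) := hle x y hx hy.le
      _ = C * Real.exp (-x ^ 2 / 2) * Real.exp (-y ^ 2 / 2) := by ring
  refine ⟨hinner, ?_⟩
  refine Integrable.mono' (((integrable_gauss.const_mul
      (C * ∫ y in Ioi (0:ℝ), Real.exp (-y ^ 2 / 2)))).integrableOn)
    ((hf.stronglyMeasurable.integral_prod_right').aestronglyMeasurable)
    (((ae_restrict_iff' measurableSet_Ioi).2 (ae_of_all _ fun x hx => ?_)))
  have h1 : 0 ≤ ∫ y in Ioi (0:ℝ), f x y :=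
    setIntegral_nonneg measurableSet_Ioi fun y hy => h0 x y hx.le hy.le
  have h2 : (∫ y in Ioi (0:ℝ), f x y) ≤
      ∫ y in Ioi (0:ℝ), (C * Real.exp (-x ^ 2 / 2)) * Real.exp (-y ^ 2 / 2) := by
    refine integral_mono_of_nonneg
      ((ae_restrict_iff' measurableSet_Ioi).2 (ae_of_all _ fun y hy => h0 x y hx.le hy.le))
      ((integrable_gauss.const_mul _).integrableOn)
      ((ae_restrict_iff' measurableSet_Ioi).2 (ae_of_all _ fun y hy => ?_))
    calc f x y ≤ C * (Real.exp (-x ^ 2 / 2) * Real.exp (-y ^ 2 / 2)) := hle x y hx.le hy.le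
      _ = (C * Real.exp (-x ^ 2 / 2)) * Real.exp (-y ^ 2 / 2) := by ring
  rw [integral_const_mul] at h2
  rw [Real.norm_eq_abs, abs_of_nonneg h1]
  calc (∫ y in Ioi (0:ℝ), f x y)
      ≤ C * Real.exp (-x ^ 2 / 2) * ∫ y in Ioi (0:ℝ), Real.exp (-y ^ 2 / 2) := h2
    _ = C * (∫ y in Ioi (0:ℝ), Real.exp (-y ^ 2 / 2)) * Real.exp (-x ^ 2 / 2) := by ring

lemma aux_mono {f g : ℝ → ℝ → ℝ} (hnn : ∀ x y, 0 ≤ x → 0 ≤ y → 0 ≤ f x y)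
    (hle : ∀ x y, 0 ≤ x → 0 ≤ y → f x y ≤ g x y)
    (hgi : ∀ x, 0 ≤ x → IntegrableOn (g x) (Ioi 0))
    (hgo : IntegrableOn (fun x => ∫ y in Ioi 0, g x y) (Ioi 0)) :
    (∫ x in Ioi (0:ℝ), ∫ y in Ioi (0:ℝ), f x y) ≤
      ∫ x in Ioi (0:ℝ), ∫ y in Ioi (0:ℝ), g x y := by
  refine integral_mono_of_nonneg
    ((ae_restrict_iff' measurableSet_Ioi).2 (ae_of_all _ fun x hx =>
      setIntegral_nonneg measurableSet_Ioi fun y hy => hnn x y hx.le hy.le)) hgo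
    ((ae_restrict_iff' measurableSet_Ioi).2 (ae_of_all _ fun x hx => ?_))
  refine integral_mono_of_nonneg
    ((ae_restrict_iff' measurableSet_Ioi).2 (ae_of_all _ fun y hy => hnn x y hx.le hy.le))
    (hgi x hx.le)
    ((ae_restrict_iff' measurableSet_Ioi).2 (ae_of_all _ fun y hy => hle x y hx.le hy.le))

lemma aux_strict {f g : ℝ → ℝ → ℝ}
    (hnn : ∀ x y, 0 ≤ x → 0 ≤ y → 0 ≤ f x y)
    (hle : ∀ x y, 0 ≤ x → 0 ≤ y → f x y ≤ g x y)
    (hlt : ∀ x y, 0 < x → 0 < y → f x y < g x y)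
    (hfi : ∀ x, 0 ≤ x → IntegrableOn (f x) (Ioi 0))
    (hfo : IntegrableOn (fun x => ∫ y in Ioi 0, f x y) (Ioi 0))
    (hgi : ∀ x, 0 ≤ x → IntegrableOn (g x) (Ioi 0))
    (hgo : IntegrableOn (fun x => ∫ y in Ioi 0, g x y) (Ioi 0)) :
    (∫ x in Ioi (0:ℝ), ∫ y in Ioi (0:ℝ), f x y) <
      ∫ x in Ioi (0:ℝ), ∫ y in Ioi (0:ℝ), g x y := by
  have key : 0 < ∫ x in Ioi (0:ℝ),
      ((∫ y in Ioi (0:ℝ), g x y) - ∫ y in Ioi (0:ℝ), f x y) := by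
    rw [setIntegral_pos_iff_support_of_nonneg_ae]
    · refine lt_of_lt_of_le ?_ (measure_mono (?_ :
        Ioi (0:ℝ) ⊆ Function.support (fun x =>
          (∫ y in Ioi (0:ℝ), g x y) - ∫ y in Ioi (0:ℝ), f x y) ∩ Ioi 0))
      · rw [Real.volume_Ioi]; exact ENNReal.zero_lt_top
      · intro x hx
        refine ⟨?_, hx⟩
        have hpos : 0 < (∫ y in Ioi (0:ℝ), g x y) - ∫ y in Ioi (0:ℝ), f x y := by
          rw [← integral_sub (hgi x hx.le) (hfi x hx.le)]
          rw [setIntegral_pos_iff_support_of_nonneg_ae]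
          · refine lt_of_lt_of_le ?_ (measure_mono (?_ :
              Ioi (0:ℝ) ⊆ Function.support (fun y => g x y - f x y) ∩ Ioi 0))
            · rw [Real.volume_Ioi]; exact ENNReal.zero_lt_top
            · intro y hy
              exact ⟨ne_of_gt (sub_pos.2 (hlt x y hx hy)), hy⟩
          · exact (ae_restrict_iff' measurableSet_Ioi).2 (ae_of_all _ fun y hy =>
              sub_nonneg.2 (hle x y hx.le hy.le))
          · exact (hgi x hx.le).sub (hfi x hx.le)
        exact ne_of_gt hpos
    · refine (ae_restrict_iff' measurableSet_Ioi).2 (ae_of_all _ fun x hx => ?_)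
      refine sub_nonneg.2 (integral_mono_of_nonneg
        ((ae_restrict_iff' measurableSet_Ioi).2 (ae_of_all _ fun y hy => hnn x y hx.le hy.le))
        (hgi x hx.le)
        ((ae_restrict_iff' measurableSet_Ioi).2 (ae_of_all _ fun y hy => hle x y hx.le hy.le)))
    · exact hgo.sub hfo
  have := integral_sub hgo hfo
  rw [this] at key
  linarith

lemma integral_Iic_neg (F : ℝ → ℝ) :
    (∫ x in Iic (0:ℝ), F x) = ∫ x in Ioi (0:ℝ), F (-x) := by
  have h := integral_comp_neg_Iic (0:ℝ) (fun t => F (-t))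
  simp only [neg_neg, neg_zero] at h
  exact h

lemma chiPP_eq (n : ℕ) (θ : ℝ) :
    chiPP n θ = ((Real.sqrt (2 * π))⁻¹ * (1 + θ)) *
      ∫ x in Ioi (0:ℝ), ∫ y in Ioi (0:ℝ), core n θ x y := by
  rw [chiPP, integral_Ici_eq_integral_Ioi, ← integral_const_mul]
  refine setIntegral_congr_fun measurableSet_Ioi (fun x hx => ?_)
  rw [integral_Ici_eq_integral_Ioi, ← integral_const_mul]
  refine setIntegral_congr_fun measurableSet_Ioi (fun y hy => ?_)
  have hx0 : (0:ℝ) < x := hx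
  have hy0 : (0:ℝ) < y := hy
  rw [k, p, μinv, Real.sign_of_pos hy0, if_pos ⟨hx0.le, hy0.le⟩, if_pos hx0.le,
      max_eq_right (mul_nonneg hx0.le hy0.le), core]
  ring

lemma chiMM_eq (n : ℕ) (hn : Odd n) (θ : ℝ) :
    chiMM n θ = (-((Real.sqrt (2 * π))⁻¹ * (1 - θ))) *
      ∫ x in Ioi (0:ℝ), ∫ y in Ioi (0:ℝ), core n (-θ) x y := by
  rw [chiMM]
  simp only [integral_Iic_neg]
  rw [← integral_const_mul]
  refine setIntegral_congr_fun measurableSet_Ioi (fun x hx => ?_)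
  rw [← integral_const_mul]
  refine setIntegral_congr_fun measurableSet_Ioi (fun y hy => ?_)
  have hx0 : (0:ℝ) < x := hx
  have hy0 : (0:ℝ) < y := hy
  rw [k, p, μinv, Real.sign_of_neg (by linarith : -y < 0),
      show -x * -y = x * y by ring, max_eq_right (mul_nonneg hx0.le hy0.le),
      if_neg (by rintro ⟨h, -⟩; linarith : ¬(0 ≤ -x ∧ 0 ≤ -y)),
      if_pos ⟨by linarith, by linarith⟩, if_neg (by linarith : ¬(0:ℝ) ≤ -x),
      show (-x - -y) ^ 2 = (x - y) ^ 2 by ring, show (-x + -y) ^ 2 = (x + y) ^ 2 by ring,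
      show (-1:ℝ) / (-1 * θ + Real.exp (2 * (x * y)))
        = -((-θ + Real.exp (2 * (x * y)))⁻¹) by ring, hn.neg_pow, core]
  ring

lemma chiPM_eq (n : ℕ) (hn : Odd n) (θ : ℝ) :
    chiPM n θ = (-((Real.sqrt (2 * π))⁻¹ * (1 + θ) * (1 - θ) * ((1 - θ)⁻¹) ^ n)) *
      ∫ x in Ioi (0:ℝ), ∫ y in Ioi (0:ℝ), Real.exp (-(x + y) ^ 2 / 2) := by
  rw [chiPM, integral_Ici_eq_integral_Ioi]
  simp only [integral_Iic_neg]
  rw [← integral_const_mul]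
  refine setIntegral_congr_fun measurableSet_Ioi (fun x hx => ?_)
  rw [← integral_const_mul]
  refine setIntegral_congr_fun measurableSet_Ioi (fun y hy => ?_)
  have hx0 : (0:ℝ) < x := hx
  have hy0 : (0:ℝ) < y := hy
  rw [k, p, μinv, Real.sign_of_neg (by linarith : -y < 0),
      show x * -y = -(x * y) by ring,
      max_eq_left (neg_nonpos.2 (mul_nonneg hx0.le hy0.le)), mul_zero, Real.exp_zero,
      if_neg (by rintro ⟨-, h⟩; linarith : ¬(0 ≤ x ∧ 0 ≤ -y)),
      if_neg (by rintro ⟨h, -⟩; linarith : ¬(x ≤ 0 ∧ -y ≤ 0)),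
      if_pos hx0.le, if_pos hx0.le,
      show (x - -y) ^ 2 = (x + y) ^ 2 by ring,
      show (-1:ℝ) / (-1 * θ + 1) = -((1 - θ)⁻¹) by ring, hn.neg_pow]
  ring

lemma chiMP_eq (n : ℕ) (θ : ℝ) :
    chiMP n θ = (((Real.sqrt (2 * π))⁻¹ * (1 + θ) * (1 - θ) * ((1 + θ)⁻¹) ^ n)) *
      ∫ x in Ioi (0:ℝ), ∫ y in Ioi (0:ℝ), Real.exp (-(x + y) ^ 2 / 2) := by
  rw [chiMP]
  simp only [integral_Iic_neg]
  rw [← integral_const_mul]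
  refine setIntegral_congr_fun measurableSet_Ioi (fun x hx => ?_)
  rw [integral_Ici_eq_integral_Ioi, ← integral_const_mul]
  refine setIntegral_congr_fun measurableSet_Ioi (fun y hy => ?_)
  have hx0 : (0:ℝ) < x := hx
  have hy0 : (0:ℝ) < y := hy
  rw [k, p, μinv, Real.sign_of_pos hy0,
      show -x * y = -(x * y) by ring,
      max_eq_left (neg_nonpos.2 (mul_nonneg hx0.le hy0.le)), mul_zero, Real.exp_zero,
      if_neg (by rintro ⟨h, -⟩; linarith : ¬(0 ≤ -x ∧ 0 ≤ y)),
      if_neg (by rintro ⟨-, h⟩; linarith : ¬(-x ≤ 0 ∧ y ≤ 0)),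
      if_neg (by linarith : ¬(0:ℝ) ≤ -x), if_neg (by linarith : ¬(0:ℝ) ≤ -x),
      show (-x - y) ^ 2 = (x + y) ^ 2 by ring,
      show (1:ℝ) / (1 * θ + 1) = (1 + θ)⁻¹ by ring]
  ring

set_option maxHeartbeats 2000000 in
theorem chi_odd_neg (m : ℕ) (hm : 1 ≤ m) (θ : ℝ) (hθ : θ ∈ Set.Ioo (0 : ℝ) 1) :
    chi (2 * m + 1) θ < 0 ∧ ((2 * m).factorial : ℝ) * chi (2 * m + 1) θ ≠ 0 := by
  obtain ⟨hθ0, hθ1⟩ := hθ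
  have hodd : Odd (2 * m + 1) := odd_two_mul_add_one m
  have h1t : (0:ℝ) < 1 - θ := by linarith
  have h1t' : (0:ℝ) < 1 + θ := by linarith
  set c : ℝ := (Real.sqrt (2 * π))⁻¹ with hc_def
  have hc : 0 < c := inv_pos.2 (Real.sqrt_pos.2 (by positivity))
  -- pointwise facts
  have hnn0 : ∀ x y : ℝ, 0 ≤ x → 0 ≤ y → 0 ≤ core (2 * m + 1) 0 x y :=
    fun x y hx hy => core_nonneg (by norm_num) (by norm_num) hx hy
  have hnnθ : ∀ x y : ℝ, 0 ≤ x → 0 ≤ y → 0 ≤ core (2 * m + 1) θ x y :=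
    fun x y hx hy => core_nonneg (by linarith) (by linarith) hx hy
  have hnnn : ∀ x y : ℝ, 0 ≤ x → 0 ≤ y → 0 ≤ core (2 * m + 1) (-θ) x y :=
    fun x y hx hy => core_nonneg (by linarith) (by linarith) hx hy
  have hgB_nn : ∀ x y : ℝ, 0 ≤ x → 0 ≤ y → (0:ℝ) ≤ Real.exp (-(x + y) ^ 2 / 2) :=
    fun x y _ _ => (Real.exp_pos _).le
  set Cd : ℝ := ((1 - θ)⁻¹) ^ (2 * m + 1) with hCd_def
  have hCd0 : 0 ≤ Cd := by positivity
  have hdomn : ∀ x y : ℝ, 0 ≤ x → 0 ≤ y →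
      core (2 * m + 1) (-θ) x y ≤ Cd * (Real.exp (-x ^ 2 / 2) * Real.exp (-y ^ 2 / 2)) :=
    fun x y hx hy => (core_neg_le_gauss hθ0.le hθ1 hx hy).trans
      (mul_le_mul_of_nonneg_left (gB_le_prod hx hy) hCd0)
  have hdom0 : ∀ x y : ℝ, 0 ≤ x → 0 ≤ y →
      core (2 * m + 1) 0 x y ≤ Cd * (Real.exp (-x ^ 2 / 2) * Real.exp (-y ^ 2 / 2)) :=
    fun x y hx hy => (core_mono2 hθ0.le hθ1 hx hy).trans (hdomn x y hx hy)
  have hdomθ : ∀ x y : ℝ, 0 ≤ x → 0 ≤ y →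
      core (2 * m + 1) θ x y ≤ Cd * (Real.exp (-x ^ 2 / 2) * Real.exp (-y ^ 2 / 2)) :=
    fun x y hx hy => (core_mono1 hθ0.le hx hy).trans (hdom0 x y hx hy)
  have hdomgB : ∀ x y : ℝ, 0 ≤ x → 0 ≤ y →
      Real.exp (-(x + y) ^ 2 / 2) ≤ (1:ℝ) * (Real.exp (-x ^ 2 / 2) * Real.exp (-y ^ 2 / 2)) :=
    fun x y hx hy => by rw [one_mul]; exact gB_le_prod hx hy
  -- integrability
  obtain ⟨hiθ, hoθ⟩ := aux_integrable (core_meas (2 * m + 1) θ) hnnθ hdomθ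
  obtain ⟨hi0, ho0⟩ := aux_integrable (core_meas (2 * m + 1) 0) hnn0 hdom0
  obtain ⟨hin, hon⟩ := aux_integrable (core_meas (2 * m + 1) (-θ)) hnnn hdomn
  obtain ⟨hig, hog⟩ := aux_integrable gB_meas hgB_nn hdomgB
  -- the four double integrals
  set Iθ := ∫ x in Ioi (0:ℝ), ∫ y in Ioi (0:ℝ), core (2 * m + 1) θ x y with hIθ_def
  set I0 := ∫ x in Ioi (0:ℝ), ∫ y in Ioi (0:ℝ), core (2 * m + 1) 0 x y with hI0_def
  set In := ∫ x in Ioi (0:ℝ), ∫ y in Ioi (0:ℝ), core (2 * m + 1) (-θ) x y with hIn_def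
  set V := ∫ x in Ioi (0:ℝ), ∫ y in Ioi (0:ℝ), Real.exp (-(x + y) ^ 2 / 2) with hV_def
  have h1 : Iθ ≤ I0 :=
    aux_mono hnnθ (fun x y hx hy => core_mono1 hθ0.le hx hy) hi0 ho0
  have h2 : I0 ≤ In :=
    aux_mono hnn0 (fun x y hx hy => core_mono2 hθ0.le hθ1 hx hy) hin hon
  have h3 : I0 < V :=
    aux_strict hnn0 (fun x y hx hy => core_zero_le_gB hx hy)
      (fun x y hx hy => core_zero_lt_gB (by omega) hx hy) hi0 ho0 hig hog
  have hI0nn : 0 ≤ I0 :=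
    setIntegral_nonneg measurableSet_Ioi fun x hx =>
      setIntegral_nonneg measurableSet_Ioi fun y hy => hnn0 x y (le_of_lt hx) (le_of_lt hy)
  have hVnn : 0 ≤ V := le_trans hI0nn h3.le
  -- conversions
  have hPP := chiPP_eq (2 * m + 1) θ
  have hMM := chiMM_eq (2 * m + 1) hodd θ
  have hPM := chiPM_eq (2 * m + 1) hodd θ
  have hMP := chiMP_eq (2 * m + 1) θ
  set a : ℝ := ((1 - θ)⁻¹) ^ (2 * m) with ha_def
  set b : ℝ := ((1 + θ)⁻¹) ^ (2 * m) with hb_def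
  have e1 : ((1 - θ)⁻¹) ^ (2 * m + 1) * (1 - θ) = a := by
    rw [pow_succ, mul_assoc, inv_mul_cancel₀ (ne_of_gt h1t), mul_one]
  have e2 : ((1 + θ)⁻¹) ^ (2 * m + 1) * (1 + θ) = b := by
    rw [pow_succ, mul_assoc, inv_mul_cancel₀ (ne_of_gt h1t'), mul_one]
  have ha1 : (1:ℝ) ≤ a := one_le_pow₀ (one_le_inv_iff₀.2 ⟨h1t, by linarith⟩)
  have hb1 : b ≤ 1 := pow_le_one₀ (by positivity) (inv_le_one_of_one_le₀ (by linarith))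
  have hchi : chi (2 * m + 1) θ =
      c * ((1 + θ) * Iθ - (1 - θ) * In - ((1 + θ) * a) * V + ((1 - θ) * b) * V) := by
    rw [chi, hPP, hMM, hPM, hMP, ← hIθ_def, ← hIn_def, ← hV_def, ← hc_def]
    linear_combination (c * (1 - θ) * V) * e2 - (c * (1 + θ) * V) * e1
  have hlin : (1 + θ) * Iθ - (1 - θ) * In - ((1 + θ) * a) * V + ((1 - θ) * b) * V ≤
      2 * θ * (I0 - V) := by
    have b1 : (1 + θ) * Iθ ≤ (1 + θ) * I0 := mul_le_mul_of_nonneg_left h1 (by linarith)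
    have b2 : (1 - θ) * I0 ≤ (1 - θ) * In := mul_le_mul_of_nonneg_left h2 (by linarith)
    have b3 : (1 + θ) * V ≤ ((1 + θ) * a) * V := by
      have : (1 + θ) * 1 ≤ (1 + θ) * a := mul_le_mul_of_nonneg_left ha1 (by linarith)
      nlinarith
    have b4 : ((1 - θ) * b) * V ≤ (1 - θ) * V := by
      have : (1 - θ) * b ≤ (1 - θ) * 1 := mul_le_mul_of_nonneg_left hb1 (by linarith)
      nlinarith
    linarith
  have hneg : 2 * θ * (I0 - V) < 0 := by nlinarith
  have hfinal : chi (2 * m + 1) θ < 0 := by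
    rw [hchi]
    calc c * ((1 + θ) * Iθ - (1 - θ) * In - ((1 + θ) * a) * V + ((1 - θ) * b) * V)
        ≤ c * (2 * θ * (I0 - V)) := mul_le_mul_of_nonneg_left hlin hc.le
      _ < 0 := mul_neg_of_pos_of_neg hc hneg
  exact ⟨hfinal, mul_ne_zero (Nat.cast_ne_zero.2 (Nat.factorial_ne_zero _)) (ne_of_lt hfinal)⟩
end

section
/- For every a > 0, every θ ∈ (−1,1), every integer m ≥ 1, and all real x, y: |k_θ(x,y)|^m ≤ (1−|θ|)^{−m}·(exp(−2x²) + exp(−a|x|))·exp(a|y−x|). Consequently, the dominating function h(x) = (1−|θ|)^{−m}(e^{−2x²}+e^{−a|x|}) satisfies ∫_ℝ h(x)|x|^γ dx < ∞ for every γ > 0. -/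
open Real MeasureTheory

lemma key_exp_ineq (a x y : ℝ) (ha : 0 < a) :
    Real.exp (-(2 * max 0 (x * y))) ≤
      (Real.exp (-2 * x ^ 2) + Real.exp (-a * |x|)) * Real.exp (a * |y - x|) := by
  rcases le_or_gt (x * y) 0 with h | h
  · have hmax : max 0 (x * y) = 0 := max_eq_left h
    have h1 : x ^ 2 ≤ (y - x) ^ 2 := by nlinarith
    have h2 : |x| ≤ |y - x| := by
      nlinarith [abs_nonneg x, abs_nonneg (y - x), sq_abs x, sq_abs (y - x)]
    have : Real.exp (-(2 * max 0 (x * y))) ≤ Real.exp (-a * |x|) * Real.exp (a * |y - x|) := by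
      rw [hmax, ← Real.exp_add]
      apply Real.exp_le_exp.2
      nlinarith
    calc Real.exp (-(2 * max 0 (x * y)))
        ≤ Real.exp (-a * |x|) * Real.exp (a * |y - x|) := this
      _ ≤ (Real.exp (-2 * x ^ 2) + Real.exp (-a * |x|)) * Real.exp (a * |y - x|) := by
          apply mul_le_mul_of_nonneg_right _ (Real.exp_pos _).le
          nlinarith [Real.exp_pos (-2 * x ^ 2)]
  · have hmax : max 0 (x * y) = x * y := max_eq_right h.le
    have hxy : x * y = |x| * |y| := by
      rw [← abs_mul, abs_of_pos h]
    rcases le_or_gt |x| |y| with hle | hlt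
    · -- |x| ≤ |y| : use the Gaussian term
      have h1 : Real.exp (-(2 * max 0 (x * y))) ≤ Real.exp (-2 * x ^ 2) := by
        apply Real.exp_le_exp.2
        rw [hmax, hxy]
        nlinarith [abs_nonneg x, sq_abs x]
      calc Real.exp (-(2 * max 0 (x * y)))
          ≤ Real.exp (-2 * x ^ 2) * Real.exp (a * |y - x|) := by
            have := Real.one_le_exp (by positivity : (0:ℝ) ≤ a * |y - x|)
            nlinarith [Real.exp_pos (-2 * x ^ 2), h1]
        _ ≤ (Real.exp (-2 * x ^ 2) + Real.exp (-a * |x|)) * Real.exp (a * |y - x|) := by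
            apply mul_le_mul_of_nonneg_right _ (Real.exp_pos _).le
            nlinarith [Real.exp_pos (-a * |x|)]
    · -- |y| < |x| : here |y - x| = |x| - |y|
      have hsq : (|x| - |y|) ^ 2 = (y - x) ^ 2 := by nlinarith [sq_abs x, sq_abs y]
      have habs : |y - x| = |x| - |y| := by
        nlinarith [abs_nonneg (y - x), sq_abs (y - x)]
      rcases le_or_gt (2 * |x|) a with hsmall | hbig
      · -- small x: use Gaussian term
        have h1 : Real.exp (-(2 * max 0 (x * y))) ≤
            Real.exp (-2 * x ^ 2) * Real.exp (a * |y - x|) := by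
          rw [← Real.exp_add]
          apply Real.exp_le_exp.2
          rw [hmax, hxy, habs]
          nlinarith [sq_abs x]
        calc Real.exp (-(2 * max 0 (x * y)))
            ≤ Real.exp (-2 * x ^ 2) * Real.exp (a * |y - x|) := h1
          _ ≤ (Real.exp (-2 * x ^ 2) + Real.exp (-a * |x|)) * Real.exp (a * |y - x|) := by
              apply mul_le_mul_of_nonneg_right _ (Real.exp_pos _).le
              nlinarith [Real.exp_pos (-a * |x|)]
      · -- large x: use exponential term
        have h1 : Real.exp (-(2 * max 0 (x * y))) ≤
            Real.exp (-a * |x|) * Real.exp (a * |y - x|) := by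
          rw [← Real.exp_add]
          apply Real.exp_le_exp.2
          rw [hmax, hxy, habs]
          nlinarith [abs_nonneg y]
        calc Real.exp (-(2 * max 0 (x * y)))
            ≤ Real.exp (-a * |x|) * Real.exp (a * |y - x|) := h1
          _ ≤ (Real.exp (-2 * x ^ 2) + Real.exp (-a * |x|)) * Real.exp (a * |y - x|) := by
              apply mul_le_mul_of_nonneg_right _ (Real.exp_pos _).le
              nlinarith [Real.exp_pos (-2 * x ^ 2)]

lemma k_abs_le (θ x y : ℝ) (hθ : |θ| < 1) :
    |k θ x y| ≤ (1 - |θ|)⁻¹ * Real.exp (-(2 * max 0 (x * y))) := by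
  have hE1 : (1:ℝ) ≤ Real.exp (2 * max 0 (x * y)) :=
    Real.one_le_exp (by positivity)
  have hθ' : 0 < 1 - |θ| := by linarith
  rcases eq_or_ne y 0 with rfl | hy
  · simp [k, Real.sign_zero]
    exact hθ.le
  · have hs : |Real.sign y| = 1 := by
      rcases lt_or_gt_of_ne hy with h | h
      · rw [Real.sign_of_neg h]; norm_num
      · rw [Real.sign_of_pos h]; norm_num
    set E := Real.exp (2 * max 0 (x * y)) with hE
    have hd : (1 - |θ|) * E ≤ |Real.sign y * θ + E| := by
      have h1 : |Real.sign y * θ| ≤ |θ| := by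
        rw [abs_mul, hs, one_mul]
      have h2 : E - |θ| ≤ |Real.sign y * θ + E| := by
        have h3 : |E| - |Real.sign y * θ| ≤ |Real.sign y * θ + E| := by
          have := abs_sub_abs_le_abs_sub E (-(Real.sign y * θ))
          simpa [add_comm, sub_neg_eq_add] using this
        rw [abs_of_pos (Real.exp_pos _ : (0:ℝ) < E)] at h3
        linarith
      nlinarith [abs_nonneg θ, hE1, h2]
    have hdpos : 0 < |Real.sign y * θ + E| := by
      have : 0 < (1 - |θ|) * E := by positivity
      linarith
    have : |k θ x y| = 1 / |Real.sign y * θ + E| := by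
      rw [k, abs_div, hs]
    rw [this, Real.exp_neg]
    rw [div_le_iff₀ hdpos]
    have : (1 - |θ|)⁻¹ * E⁻¹ * ((1 - |θ|) * E) = 1 := by
      field_simp
    calc (1:ℝ) = (1 - |θ|)⁻¹ * E⁻¹ * ((1 - |θ|) * E) := this.symm
      _ ≤ (1 - |θ|)⁻¹ * E⁻¹ * |Real.sign y * θ + E| := by
          apply mul_le_mul_of_nonneg_left hd
          positivity

lemma integrable_of_even {g : ℝ → ℝ} (hg : ∀ x, g (-x) = g x)
    (hm : MeasureTheory.AEStronglyMeasurable g (volume : Measure ℝ))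
    (h : MeasureTheory.IntegrableOn g (Set.Ioi 0)) : MeasureTheory.Integrable g := by
  rw [← integrableOn_univ, ← @Set.Iio_union_Ici _ _ (0 : ℝ), integrableOn_union,
    integrableOn_Ici_iff_integrableOn_Ioi]
  refine ⟨?_, h⟩
  rw [← (Measure.measurePreserving_neg (volume : Measure ℝ)).integrableOn_comp_preimage
      (Homeomorph.neg ℝ).measurableEmbedding]
  simp only [Function.comp_def, Set.neg_preimage, Set.neg_Iio, neg_zero, hg]
  exact h

theorem k_domination (a : ℝ) (ha : 0 < a) (θ : ℝ) (hθ : θ ∈ Set.Ioo (-1 : ℝ) 1)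
    (m : ℕ) (hm : 1 ≤ m) :
    (∀ x y : ℝ,
      |k θ x y| ^ m ≤ ((1 - |θ|) ^ m)⁻¹ *
        (Real.exp (-2 * x ^ 2) + Real.exp (-a * |x|)) * Real.exp (a * |y - x|)) ∧
    (∀ γ : ℝ, 0 < γ →
      MeasureTheory.Integrable (fun x : ℝ =>
        ((1 - |θ|) ^ m)⁻¹ * (Real.exp (-2 * x ^ 2) + Real.exp (-a * |x|)) * |x| ^ γ)) := by
  have hθ1 : |θ| < 1 := abs_lt.2 ⟨hθ.1, hθ.2⟩
  have hθ' : 0 < 1 - |θ| := by linarith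
  constructor
  · intro x y
    have h1 : |k θ x y| ≤ (1 - |θ|)⁻¹ * Real.exp (-(2 * max 0 (x * y))) :=
      k_abs_le θ x y hθ1
    have h2 : |k θ x y| ^ m ≤ ((1 - |θ|)⁻¹ * Real.exp (-(2 * max 0 (x * y)))) ^ m :=
      pow_le_pow_left₀ (abs_nonneg _) h1 m
    have hEm : (Real.exp (-(2 * max 0 (x * y)))) ^ m ≤ Real.exp (-(2 * max 0 (x * y))) := by
      have h0 : 0 ≤ Real.exp (-(2 * max 0 (x * y))) := (Real.exp_pos _).le
      have h1' : Real.exp (-(2 * max 0 (x * y))) ≤ 1 := by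
        apply Real.exp_le_one_iff.2
        have : (0:ℝ) ≤ max 0 (x * y) := le_max_left _ _
        linarith
      calc (Real.exp (-(2 * max 0 (x * y)))) ^ m
          ≤ (Real.exp (-(2 * max 0 (x * y)))) ^ 1 := pow_le_pow_of_le_one h0 h1' hm
        _ = Real.exp (-(2 * max 0 (x * y))) := pow_one _
    have h3 : ((1 - |θ|)⁻¹ * Real.exp (-(2 * max 0 (x * y)))) ^ m
        ≤ ((1 - |θ|) ^ m)⁻¹ * Real.exp (-(2 * max 0 (x * y))) := by
      rw [mul_pow, ← inv_pow]
      exact mul_le_mul_of_nonneg_left hEm (by positivity)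
    have h4 : ((1 - |θ|) ^ m)⁻¹ * Real.exp (-(2 * max 0 (x * y)))
        ≤ ((1 - |θ|) ^ m)⁻¹ *
          ((Real.exp (-2 * x ^ 2) + Real.exp (-a * |x|)) * Real.exp (a * |y - x|)) :=
      mul_le_mul_of_nonneg_left (key_exp_ineq a x y ha) (by positivity)
    calc |k θ x y| ^ m ≤ ((1 - |θ|)⁻¹ * Real.exp (-(2 * max 0 (x * y)))) ^ m := h2
      _ ≤ ((1 - |θ|) ^ m)⁻¹ * Real.exp (-(2 * max 0 (x * y))) := h3
      _ ≤ ((1 - |θ|) ^ m)⁻¹ *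
          ((Real.exp (-2 * x ^ 2) + Real.exp (-a * |x|)) * Real.exp (a * |y - x|)) := h4
      _ = ((1 - |θ|) ^ m)⁻¹ *
          (Real.exp (-2 * x ^ 2) + Real.exp (-a * |x|)) * Real.exp (a * |y - x|) := by ring
  · intro γ hγ
    have hγ' : (-1:ℝ) < γ := by linarith
    have hmeas1 : MeasureTheory.AEStronglyMeasurable
        (fun x : ℝ => Real.exp (-2 * x ^ 2) * |x| ^ γ) (volume : Measure ℝ) := by
      apply Measurable.aestronglyMeasurable
      exact (((measurable_id.pow_const 2).const_mul (-2)).exp).mul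
        (measurable_id.abs.pow_const γ)
    have hmeas2 : MeasureTheory.AEStronglyMeasurable
        (fun x : ℝ => Real.exp (-a * |x|) * |x| ^ γ) (volume : Measure ℝ) := by
      apply Measurable.aestronglyMeasurable
      exact ((measurable_id.abs.const_mul (-a)).exp).mul (measurable_id.abs.pow_const γ)
    have hi1 : MeasureTheory.Integrable (fun x : ℝ => Real.exp (-2 * x ^ 2) * |x| ^ γ) := by
      apply integrable_of_even (fun x => by simp) hmeas1
      apply (integrableOn_rpow_mul_exp_neg_mul_sq (by norm_num : (0:ℝ) < 2) hγ').congr_fun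
        _ measurableSet_Ioi
      intro x hx
      have hxpos : (0:ℝ) < x := hx
      show x ^ γ * Real.exp (-2 * x ^ 2) = Real.exp (-2 * x ^ 2) * |x| ^ γ
      rw [abs_of_pos hxpos, mul_comm]
    have hi2 : MeasureTheory.Integrable (fun x : ℝ => Real.exp (-a * |x|) * |x| ^ γ) := by
      apply integrable_of_even (fun x => by simp) hmeas2
      have := integrableOn_rpow_mul_exp_neg_mul_rpow hγ' (zero_lt_one' ℝ) ha
      apply this.congr_fun _ measurableSet_Ioi
      intro x hx
      have hxpos : (0:ℝ) < x := hx
      show x ^ γ * Real.exp (-a * x ^ (1:ℝ)) = Real.exp (-a * |x|) * |x| ^ γ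
      rw [Real.rpow_one, abs_of_pos hxpos, mul_comm]
    have : MeasureTheory.Integrable
        (fun x : ℝ => Real.exp (-2 * x ^ 2) * |x| ^ γ + Real.exp (-a * |x|) * |x| ^ γ) :=
      hi1.add hi2
    have h := this.const_mul (((1 - |θ|) ^ m)⁻¹)
    apply h.congr
    filter_upwards with x
    ring
end
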